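/- arXiv:1702.06344 — 2 statements merged into one kernel-verified Lean document; each statement's English description precedes it below -/
import Mathlib

section
/- For p > 0, the function F(z) = z^{p+1} · K_0(2√z) · ₁F₂(1; p+1, p+2; z)/(p+1) + z^{p+3/2} · K_1(2√z) · ₁F₂(1; p+2, p+2; z)/(p+1)² is an antiderivative of z ↦ z^p · K_0(2√z) on (0, ∞). -/
open Real MeasureTheory Filter Set Topology

/-- Modified Bessel function of the second kind of order `t`. -/
noncomputable def besselK (t x : ℝ) : ℝ :=
  ∫ u in Set.Ioi (0 : ℝ), Real.exp (-x * Real.cosh u) * Real.cosh (t * u)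

/-- Generalized hypergeometric function `₁F₂(1; a, b; z)`. -/
noncomputable def oneF2 (a b z : ℝ) : ℝ :=
  ∑' j : ℕ, z ^ j * (Real.Gamma a * Real.Gamma b) /
    (Real.Gamma (a + j) * Real.Gamma (b + j))

noncomputable def hgc (a b : ℝ) (j : ℕ) : ℝ :=
  Real.Gamma a * Real.Gamma b / (Real.Gamma (a + j) * Real.Gamma (b + j))


lemma cosh_quad (u : ℝ) (hu : 0 ≤ u) : 1 + u^2/2 ≤ Real.cosh u := by
  have h1 : Real.cosh u = 2 * Real.sinh (u/2) ^ 2 + 1 := by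
    have := Real.cosh_two_mul (u/2)
    have h2 := Real.cosh_sq (u/2)
    rw [show 2 * (u/2) = u by ring] at this
    rw [this, h2]; ring
  have h3 : u/2 ≤ Real.sinh (u/2) := Real.self_le_sinh_iff.2 (by linarith)
  nlinarith [Real.sinh_nonneg_iff.2 (by linarith : (0:ℝ) ≤ u/2)]

lemma cosh_le_exp (u : ℝ) (hu : 0 ≤ u) : Real.cosh u ≤ Real.exp u := by
  rw [Real.cosh_eq]
  have := Real.exp_le_exp.2 (by linarith : -u ≤ u)
  linarith

lemma sinh_le_exp (u : ℝ) : Real.sinh u ≤ Real.exp u := by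
  rw [Real.sinh_eq]
  have := (Real.exp_pos (-u)).le
  have := (Real.exp_pos u).le
  linarith

lemma integrable_exp_aux (a c : ℝ) (hc : 0 < c) :
    IntegrableOn (fun u => Real.exp (a * u - c * Real.cosh u)) (Ioi (0:ℝ)) := by
  have key : ∀ u ∈ Ioi (0:ℝ), ‖Real.exp (a * u - c * Real.cosh u)‖ ≤
      Real.exp ((a+1)^2/(2*c) - c) * Real.exp (-u) := by
    intro u hu
    have hu0 : (0:ℝ) ≤ u := (le_of_lt hu)
    rw [Real.norm_eq_abs, Real.abs_exp, ← Real.exp_add]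
    apply Real.exp_le_exp.2
    have h := cosh_quad u hu0
    have h2 : (a+1)*u ≤ ((a+1)^2 + c^2*u^2)/(2*c) := by
      rw [le_div_iff₀ (by linarith)]; nlinarith [sq_nonneg (c*u - (a+1))]
    have h3 : ((a+1)^2 + c^2*u^2)/(2*c) = (a+1)^2/(2*c) + c*u^2/2 := by
      field_simp
    have h4 := mul_le_mul_of_nonneg_left h hc.le
    nlinarith
  have hint : IntegrableOn (fun u => Real.exp ((a+1)^2/(2*c) - c) * Real.exp (-u)) (Ioi (0:ℝ)) := by
    have := (exp_neg_integrableOn_Ioi (0:ℝ) (one_pos)).const_mul (Real.exp ((a+1)^2/(2*c) - c))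
    simpa [IntegrableOn] using this
  apply hint.mono'
  · exact (Real.continuous_exp.comp ((continuous_const.mul continuous_id).sub
      (continuous_const.mul Real.continuous_cosh))).aestronglyMeasurable
  · exact (ae_restrict_iff' measurableSet_Ioi).2 (ae_of_all _ key)


lemma bound_helper (t c y u : ℝ) (ht : 0 ≤ t) (hu : 0 ≤ u) (hxy : c ≤ y) :
    Real.cosh u * (Real.exp (-y * Real.cosh u) * Real.cosh (t * u)) ≤
      Real.exp ((1 + t) * u - c * Real.cosh u) := by
  have h1 : (0:ℝ) < Real.cosh u := Real.cosh_pos u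
  have hc1 : Real.cosh u ≤ Real.exp u := cosh_le_exp u hu
  have hc2 : Real.cosh (t*u) ≤ Real.exp (t*u) := cosh_le_exp _ (by positivity)
  have hc3 : Real.exp (-y * Real.cosh u) ≤ Real.exp (-c * Real.cosh u) :=
    Real.exp_le_exp.2 (by nlinarith)
  calc Real.cosh u * (Real.exp (-y * Real.cosh u) * Real.cosh (t * u))
      ≤ Real.exp u * (Real.exp (-c * Real.cosh u) * Real.exp (t*u)) := by
        apply mul_le_mul hc1 _ (by positivity) (by positivity)
        exact mul_le_mul hc3 hc2 (Real.cosh_pos _).le (by positivity)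
    _ = Real.exp ((1 + t) * u - c * Real.cosh u) := by
        rw [← Real.exp_add, ← Real.exp_add]; ring_nf

lemma integrable_bessel_aux (t x : ℝ) (k : ℕ) (ht : 0 ≤ t) (hx : 0 < x) :
    IntegrableOn (fun u => Real.cosh u ^ k * (Real.exp (-x * Real.cosh u) * Real.cosh (t * u)))
      (Ioi (0:ℝ)) := by
  apply (integrable_exp_aux (k + t) x hx).mono'
  · apply Continuous.aestronglyMeasurable
    exact (Real.continuous_cosh.pow k).mul
      ((Real.continuous_exp.comp ((continuous_const.mul Real.continuous_cosh))).mul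
        (Real.continuous_cosh.comp (continuous_const.mul continuous_id)))
  · refine (ae_restrict_iff' measurableSet_Ioi).2 (ae_of_all _ fun u hu => ?_)
    have hu0 : (0:ℝ) ≤ u := le_of_lt hu
    have h1 : (0:ℝ) < Real.cosh u := Real.cosh_pos u
    have h2 : (0:ℝ) < Real.cosh (t*u) := Real.cosh_pos (t*u)
    rw [Real.norm_eq_abs, abs_of_nonneg (by positivity)]
    have hc1 : Real.cosh u ^ k ≤ Real.exp ((k:ℝ) * u) := by
      calc Real.cosh u ^ k ≤ Real.exp u ^ k := pow_le_pow_left₀ h1.le (cosh_le_exp u hu0) k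
        _ = Real.exp ((k:ℝ)*u) := by rw [← Real.exp_nat_mul]
    have hc2 : Real.cosh (t*u) ≤ Real.exp (t*u) := cosh_le_exp _ (by positivity)
    have : Real.cosh u ^ k * (Real.exp (-x * Real.cosh u) * Real.cosh (t * u))
        ≤ Real.exp ((k:ℝ)*u) * (Real.exp (-x * Real.cosh u) * Real.exp (t*u)) := by
      apply mul_le_mul hc1 _ (by positivity) (by positivity)
      exact mul_le_mul_of_nonneg_left hc2 (Real.exp_pos _).le
    refine this.trans (le_of_eq ?_)
    rw [← Real.exp_add, ← Real.exp_add]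
    ring_nf

lemma besselK_hasDerivAt (t x : ℝ) (ht : 0 ≤ t) (hx : 0 < x) :
    HasDerivAt (besselK t)
      (-∫ u in Ioi (0:ℝ), Real.cosh u * (Real.exp (-x * Real.cosh u) * Real.cosh (t * u))) x := by
  have hmain := hasDerivAt_integral_of_dominated_loc_of_deriv_le
    (μ := volume.restrict (Ioi (0:ℝ))) (x₀ := x)
    (F := fun y u => Real.exp (-y * Real.cosh u) * Real.cosh (t * u))
    (F' := fun y u => -(Real.cosh u * (Real.exp (-y * Real.cosh u) * Real.cosh (t * u))))
    (bound := fun u => Real.exp ((1 + t) * u - (x/2) * Real.cosh u))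
    (Metric.ball_mem_nhds x (half_pos hx))
    ?_ ?_ ?_ ?_ ?_ ?_
  · have := hmain.2
    rwa [integral_neg] at this
  · filter_upwards with y
    exact ((Real.continuous_exp.comp (continuous_const.mul Real.continuous_cosh)).mul
      (Real.continuous_cosh.comp (continuous_const.mul continuous_id))).aestronglyMeasurable
  · simpa [IntegrableOn] using integrable_bessel_aux t x 0 ht hx
  · apply Continuous.aestronglyMeasurable
    exact ((Real.continuous_cosh.mul
      ((Real.continuous_exp.comp (continuous_const.mul Real.continuous_cosh)).mul
        (Real.continuous_cosh.comp (continuous_const.mul continuous_id))))).neg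
  · refine (ae_restrict_iff' measurableSet_Ioi).2 (ae_of_all _ fun u hu y hy => ?_)
    have hu0 : (0:ℝ) ≤ u := le_of_lt hu
    have hy2 : x/2 ≤ y := by
      have := abs_lt.1 (mem_ball_iff_norm.1 hy)
      linarith [this.1]
    show ‖-(Real.cosh u * (Real.exp (-y * Real.cosh u) * Real.cosh (t * u)))‖ ≤ _
    rw [norm_neg, Real.norm_eq_abs,
      abs_of_nonneg (by positivity : (0:ℝ) ≤ Real.cosh u * (Real.exp (-y * Real.cosh u) * Real.cosh (t * u)))]
    exact bound_helper t (x/2) y u ht hu0 hy2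
  · exact integrable_exp_aux (1+t) (x/2) (half_pos hx)
  · refine (ae_restrict_iff' measurableSet_Ioi).2 (ae_of_all _ fun u hu y hy => ?_)
    have h1 : HasDerivAt (fun y : ℝ => -y * Real.cosh u) (-Real.cosh u) y := by
      simpa using ((hasDerivAt_id y).neg.mul_const (Real.cosh u))
    have := (h1.exp).mul_const (Real.cosh (t*u))
    refine HasDerivAt.congr_deriv this ?_
    ring


section pieces
variable (x : ℝ) (hx : 0 < x)

lemma int_e (hx : 0 < x) : IntegrableOn (fun u => Real.exp (-x * Real.cosh u)) (Ioi (0:ℝ)) := by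
  apply (integrable_exp_aux 0 x hx).mono'
  · exact (Real.continuous_exp.comp (continuous_const.mul Real.continuous_cosh)).aestronglyMeasurable
  · refine (ae_restrict_iff' measurableSet_Ioi).2 (ae_of_all _ fun u hu => ?_)
    rw [Real.norm_eq_abs, Real.abs_exp]
    exact Real.exp_le_exp.2 (by ring_nf; exact le_rfl)

lemma int_ce (hx : 0 < x) :
    IntegrableOn (fun u => Real.cosh u * Real.exp (-x * Real.cosh u)) (Ioi (0:ℝ)) := by
  apply (integrable_exp_aux 1 x hx).mono'
  · exact (Real.continuous_cosh.mul
      (Real.continuous_exp.comp (continuous_const.mul Real.continuous_cosh))).aestronglyMeasurable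
  · refine (ae_restrict_iff' measurableSet_Ioi).2 (ae_of_all _ fun u hu => ?_)
    have hu0 : (0:ℝ) ≤ u := le_of_lt hu
    rw [Real.norm_eq_abs, abs_of_nonneg (by positivity)]
    calc Real.cosh u * Real.exp (-x * Real.cosh u)
        ≤ Real.exp u * Real.exp (-x * Real.cosh u) :=
          mul_le_mul_of_nonneg_right (cosh_le_exp u hu0) (Real.exp_pos _).le
      _ = Real.exp (1 * u - x * Real.cosh u) := by rw [← Real.exp_add]; ring_nf

lemma int_se (hx : 0 < x) :
    IntegrableOn (fun u => Real.sinh u ^ 2 * Real.exp (-x * Real.cosh u)) (Ioi (0:ℝ)) := by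
  apply (integrable_exp_aux 2 x hx).mono'
  · exact ((Real.continuous_sinh.pow 2).mul
      (Real.continuous_exp.comp (continuous_const.mul Real.continuous_cosh))).aestronglyMeasurable
  · refine (ae_restrict_iff' measurableSet_Ioi).2 (ae_of_all _ fun u hu => ?_)
    have hu0 : (0:ℝ) ≤ u := le_of_lt hu
    have hs : (0:ℝ) ≤ Real.sinh u := Real.sinh_nonneg_iff.2 hu0
    rw [Real.norm_eq_abs, abs_of_nonneg (by positivity)]
    calc Real.sinh u ^ 2 * Real.exp (-x * Real.cosh u)
        ≤ Real.exp u ^ 2 * Real.exp (-x * Real.cosh u) :=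
          mul_le_mul_of_nonneg_right
            (pow_le_pow_left₀ hs (sinh_le_exp u) 2) (Real.exp_pos _).le
      _ = Real.exp (2 * u - x * Real.cosh u) := by
          rw [← Real.exp_nat_mul, ← Real.exp_add]; ring_nf

lemma besselK_zero_eq : besselK 0 x = ∫ u in Ioi (0:ℝ), Real.exp (-x * Real.cosh u) := by
  unfold besselK; norm_num

lemma besselK_one_eq : besselK 1 x = ∫ u in Ioi (0:ℝ), Real.cosh u * Real.exp (-x * Real.cosh u) := by
  unfold besselK; norm_num [mul_comm]

lemma ibp (hx : 0 < x) :
    ∫ u in Ioi (0:ℝ), Real.sinh u ^ 2 * Real.exp (-x * Real.cosh u) =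
      (1/x) * ∫ u in Ioi (0:ℝ), Real.cosh u * Real.exp (-x * Real.cosh u) := by
  have hderiv : ∀ u ∈ Ici (0:ℝ),
      HasDerivAt (fun u => -(1/x) * (Real.sinh u * Real.exp (-x * Real.cosh u)))
        (Real.sinh u ^ 2 * Real.exp (-x * Real.cosh u)
          - (1/x) * (Real.cosh u * Real.exp (-x * Real.cosh u))) u := by
    intro u _
    have h1 : HasDerivAt (fun u : ℝ => -x * Real.cosh u) (-x * Real.sinh u) u :=
      (Real.hasDerivAt_cosh u).const_mul (-x)
    have h3 := (Real.hasDerivAt_sinh u).mul h1.exp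
    have h4 := h3.const_mul (-(1/x))
    refine HasDerivAt.congr_deriv h4 ?_
    have hx0 := hx.ne'
    field_simp
    ring
  have f'int : IntegrableOn (fun u => Real.sinh u ^ 2 * Real.exp (-x * Real.cosh u)
      - (1/x) * (Real.cosh u * Real.exp (-x * Real.cosh u))) (Ioi (0:ℝ)) :=
    (int_se x hx).sub ((int_ce x hx).const_mul (1/x))
  have htend : Tendsto (fun u => -(1/x) * (Real.sinh u * Real.exp (-x * Real.cosh u)))
      atTop (𝓝 0) := by
    have hbase : Tendsto (fun u => Real.sinh u * Real.exp (-x * Real.cosh u)) atTop (𝓝 0) := by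
      apply tendsto_of_tendsto_of_tendsto_of_le_of_le' tendsto_const_nhds
        (Real.tendsto_exp_atBot.comp tendsto_neg_atTop_atBot)
      · filter_upwards [eventually_ge_atTop (0:ℝ)] with u hu
        have := Real.sinh_nonneg_iff.2 hu
        positivity
      · filter_upwards [eventually_ge_atTop (max 0 (4/x))] with u hu
        have hu0 : (0:ℝ) ≤ u := le_trans (le_max_left _ _) hu
        have hu4 : 4/x ≤ u := le_trans (le_max_right _ _) hu
        have hq := cosh_quad u hu0
        have hs : Real.sinh u ≤ Real.exp u := sinh_le_exp u
        have hss : (0:ℝ) ≤ Real.sinh u := Real.sinh_nonneg_iff.2 hu0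
        calc Real.sinh u * Real.exp (-x * Real.cosh u)
            ≤ Real.exp u * Real.exp (-x * Real.cosh u) :=
              mul_le_mul_of_nonneg_right hs (Real.exp_pos _).le
          _ = Real.exp (u - x * Real.cosh u) := by rw [← Real.exp_add]; ring_nf
          _ ≤ Real.exp (-u) := by
              apply Real.exp_le_exp.2
              have h4u : 4 * u ≤ x * u^2 := by
                rw [div_le_iff₀ hx] at hu4
                nlinarith
              nlinarith
    have := hbase.const_mul (-(1/x))
    simpa using this
  have key := integral_Ioi_of_hasDerivAt_of_tendsto' hderiv f'int htend
  rw [integral_sub (int_se x hx) ((int_ce x hx).const_mul (1/x))] at key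
  rw [MeasureTheory.integral_const_mul] at key
  rw [Real.sinh_zero, zero_mul, mul_zero, sub_zero] at key
  linarith [key]

lemma besselK_deriv_zero (hx : 0 < x) :
    HasDerivAt (besselK 0) (-besselK 1 x) x := by
  have h := besselK_hasDerivAt 0 x le_rfl hx
  convert h using 2
  rw [besselK_one_eq]
  apply setIntegral_congr_fun measurableSet_Ioi
  intro u _
  dsimp only
  norm_num [mul_comm]

lemma besselK_deriv_one (hx : 0 < x) :
    HasDerivAt (besselK 1) (-(besselK 0 x + besselK 1 x / x)) x := by
  have h := besselK_hasDerivAt 1 x zero_le_one hx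
  convert h using 2
  have hcongr : ∫ u in Ioi (0:ℝ), Real.cosh u * (Real.exp (-x * Real.cosh u) * Real.cosh (1 * u)) =
      ∫ u in Ioi (0:ℝ), (Real.exp (-x * Real.cosh u)
        + Real.sinh u ^ 2 * Real.exp (-x * Real.cosh u)) := by
    apply setIntegral_congr_fun measurableSet_Ioi
    intro u _
    dsimp only
    rw [one_mul]
    linear_combination Real.exp (-x * Real.cosh u) * (Real.cosh_sq u)
  rw [hcongr, integral_add (int_e x hx) (int_se x hx), ibp x hx,
    besselK_zero_eq, besselK_one_eq]
  ring


/-- coefficient -/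
lemma oneF2_eq (a b z : ℝ) : oneF2 a b z = ∑' j : ℕ, hgc a b j * z ^ j := by
  unfold oneF2 hgc
  exact tsum_congr fun j => by ring

lemma hgc_pos (a b : ℝ) (ha : 0 < a) (hb : 0 < b) (j : ℕ) : 0 < hgc a b j := by
  unfold hgc
  have h1 := Real.Gamma_pos_of_pos ha
  have h2 := Real.Gamma_pos_of_pos hb
  have h3 := Real.Gamma_pos_of_pos (by positivity : (0:ℝ) < a + j)
  have h4 := Real.Gamma_pos_of_pos (by positivity : (0:ℝ) < b + j)
  positivity

lemma hgc_zero (a b : ℝ) (ha : 0 < a) (hb : 0 < b) : hgc a b 0 = 1 := by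
  unfold hgc
  have h1 := (Real.Gamma_pos_of_pos ha).ne'
  have h2 := (Real.Gamma_pos_of_pos hb).ne'
  norm_num
  exact ⟨h1, h2⟩

lemma hgc_succ (a b : ℝ) (ha : 0 < a) (hb : 0 < b) (j : ℕ) :
    hgc a b (j+1) = hgc a b j / ((a + j) * (b + j)) := by
  unfold hgc
  have ha' : (0:ℝ) < a + j := by positivity
  have hb' : (0:ℝ) < b + j := by positivity
  have e1 : a + (j+1 : ℕ) = (a + j) + 1 := by push_cast; ring
  have e2 : b + (j+1 : ℕ) = (b + j) + 1 := by push_cast; ring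
  rw [e1, e2, Real.Gamma_add_one ha'.ne', Real.Gamma_add_one hb'.ne']
  have g1 := (Real.Gamma_pos_of_pos ha').ne'
  have g2 := (Real.Gamma_pos_of_pos hb').ne'
  field_simp

lemma summable_deriv_aux (a b z : ℝ) (ha : 0 < a) (hb : 0 < b) :
    Summable (fun j : ℕ => ((j:ℝ)+1) * hgc a b (j+1) * z ^ j) := by
  apply summable_of_ratio_norm_eventually_le (r := 1/2) (by norm_num)
  have hev : ∀ᶠ j : ℕ in atTop, (4 * |z| + 4 : ℝ) ≤ j :=
    tendsto_natCast_atTop_atTop.eventually_ge_atTop _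
  filter_upwards [hev] with j hj
  have hz0 : (0:ℝ) ≤ |z| := abs_nonneg z
  have hj0 : (0:ℝ) ≤ (j:ℝ) := Nat.cast_nonneg j
  set C := hgc a b (j+1) with hC
  have hc : 0 < C := hgc_pos a b ha hb (j+1)
  set D := (a + ((j+1:ℕ):ℝ)) * (b + ((j+1:ℕ):ℝ)) with hD
  have hd : (0:ℝ) < D := by
    have : (0:ℝ) ≤ ((j+1:ℕ):ℝ) := Nat.cast_nonneg _
    rw [hD]; positivity
  have hrec : hgc a b (j+1+1) = C / D := hgc_succ a b ha hb (j+1)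
  have hDge : 4 * |z| + 4 ≤ D := by
    rw [hD]; push_cast
    nlinarith [hj, hz0]
  rw [Real.norm_eq_abs, Real.norm_eq_abs, hrec]
  have e1 : |(((j+1:ℕ):ℝ)+1) * (C / D) * z ^ (j+1)| =
      ((j:ℝ)+2) * (C / D) * (|z| * |z|^j) := by
    rw [abs_mul, abs_mul, abs_of_nonneg (by positivity : (0:ℝ) ≤ ((j+1:ℕ):ℝ)+1),
      abs_of_nonneg (by positivity : (0:ℝ) ≤ C / D), pow_succ, abs_mul, abs_pow]
    push_cast
    ring
  have e2 : |((j:ℝ)+1) * C * z ^ j| = ((j:ℝ)+1) * C * |z|^j := by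
    rw [abs_mul, abs_mul, abs_pow, abs_of_nonneg (by positivity : (0:ℝ) ≤ (j:ℝ)+1),
      abs_of_nonneg hc.le]
  rw [e1, e2]
  have hpow : (0:ℝ) ≤ |z|^j := by positivity
  have s1 : ((j:ℝ)+2)*|z| ≤ (2*|z|+2)*((j:ℝ)+1) := by nlinarith
  have s2 : (((j:ℝ)+2)*|z|) * (C*|z|^j) ≤ ((2*|z|+2)*((j:ℝ)+1)) * (C*|z|^j) :=
    mul_le_mul_of_nonneg_right s1 (by positivity)
  have s4 : (2*|z|+2) ≤ D/2 := by linarith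
  have s5 : (2*|z|+2)*(((j:ℝ)+1)*(C*|z|^j)) ≤ (D/2)*(((j:ℝ)+1)*(C*|z|^j)) :=
    mul_le_mul_of_nonneg_right s4 (by positivity)
  rw [show ((j:ℝ)+2) * (C/D) * (|z| * |z| ^ j) = (((j:ℝ)+2) * C * (|z| * |z| ^ j)) / D by ring,
    div_le_iff₀ hd]
  nlinarith [s2, s5]

lemma summable_shifted (a b z : ℝ) (ha : 0 < a) (hb : 0 < b) :
    Summable (fun j : ℕ => hgc a b (j+1) * z ^ (j+1)) := by
  apply Summable.of_norm_bounded (g := fun j : ℕ => |z| * (((j:ℝ)+1) * hgc a b (j+1) * |z| ^ j))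
    ((summable_deriv_aux a b |z| ha hb).mul_left |z|)
  intro j
  have hc := hgc_pos a b ha hb (j+1)
  have hp : (0:ℝ) ≤ |z|^j := by positivity
  rw [Real.norm_eq_abs, abs_mul, abs_pow, abs_of_nonneg hc.le, pow_succ]
  nlinarith [mul_nonneg (mul_nonneg hc.le hp) (abs_nonneg z), Nat.cast_nonneg (α := ℝ) j]

lemma summable_hgc_mul_pow (a b z : ℝ) (ha : 0 < a) (hb : 0 < b) :
    Summable (fun j : ℕ => hgc a b j * z ^ j) :=
  (summable_nat_add_iff 1).mp (by simpa using summable_shifted a b z ha hb)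


lemma summable_j_mul (a b z : ℝ) (ha : 0 < a) (hb : 0 < b) :
    Summable (fun j : ℕ => (j:ℝ) * hgc a b j * z ^ j) := by
  apply (summable_nat_add_iff 1).mp
  apply ((summable_deriv_aux a b z ha hb).mul_left z).congr
  intro j
  push_cast
  ring

lemma oneF2_hasDerivAt (a b z : ℝ) (ha : 0 < a) (hb : 0 < b) :
    HasDerivAt (fun y => oneF2 a b y)
      (∑' j : ℕ, ((j:ℝ)+1) * hgc a b (j+1) * z ^ j) z := by
  simp only [oneF2_eq]
  set R : ℝ := |z| + 1 with hR
  have hzR : z ∈ Ioo (-R) R := by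
    constructor <;> [nlinarith [neg_abs_le z]; nlinarith [le_abs_self z]]
  have hmain := hasDerivAt_tsum_of_isPreconnected
    (u := fun j : ℕ => (j:ℝ) * hgc a b j * R ^ (j-1))
    (g := fun j : ℕ => fun y : ℝ => hgc a b j * y ^ j)
    (g' := fun j : ℕ => fun y : ℝ => hgc a b j * ((j:ℝ) * y ^ (j-1)))
    (t := Ioo (-R) R) (y₀ := z) (y := z)
    ?_ isOpen_Ioo (convex_Ioo _ _).isPreconnected ?_ ?_ hzR ?_ hzR
  · refine HasDerivAt.congr_deriv hmain ?_
    have hsum : Summable (fun j : ℕ => hgc a b j * ((j:ℝ) * z ^ (j-1))) := by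
      apply (summable_nat_add_iff 1).mp
      apply (summable_deriv_aux a b z ha hb).congr
      intro j
      simp only [Nat.add_sub_cancel]
      push_cast
      ring
    rw [Summable.tsum_eq_zero_add hsum]
    simp only [Nat.cast_zero, zero_mul, mul_zero, zero_add]
    apply tsum_congr
    intro j
    simp only [Nat.add_sub_cancel]
    push_cast
    ring
  · -- Summable u
    apply (summable_nat_add_iff 1).mp
    apply ((summable_deriv_aux a b R ha hb)).congr
    intro j
    simp only [Nat.add_sub_cancel]
    push_cast
    ring
  · intro j y _
    exact (hasDerivAt_pow j y).const_mul _
  · intro j y hy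
    have hyR : |y| ≤ R := by
      rcases hy with ⟨h1, h2⟩
      rw [abs_le]; constructor <;> linarith
    have hc := hgc_pos a b ha hb j
    rw [Real.norm_eq_abs, abs_mul, abs_mul, abs_pow, abs_of_nonneg hc.le,
      Nat.abs_cast]
    have hRpos : (0:ℝ) < R := by positivity
    have : |y| ^ (j-1) ≤ R ^ (j-1) := pow_le_pow_left₀ (abs_nonneg y) hyR _
    have hj0 : (0:ℝ) ≤ (j:ℝ) := Nat.cast_nonneg j
    calc hgc a b j * ((j:ℝ) * |y| ^ (j-1)) ≤ hgc a b j * ((j:ℝ) * R ^ (j-1)) := by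
          apply mul_le_mul_of_nonneg_left (mul_le_mul_of_nonneg_left this hj0) hc.le
      _ = (j:ℝ) * hgc a b j * R ^ (j-1) := by ring
  · exact summable_hgc_mul_pow a b z ha hb

-- coefficient identities for a = p+1, b = p+2
lemma kB (p : ℝ) (hp : 0 < p) (j : ℕ) :
    ((p+1)+(j:ℝ)) * hgc (p+2) (p+2) j = (p+1) * hgc (p+1) (p+2) j := by
  unfold hgc
  have h1 : (0:ℝ) < p + 1 + j := by positivity
  have e1 : p + 2 + (j:ℝ) = (p + 1 + j) + 1 := by ring
  rw [e1, Real.Gamma_add_one h1.ne']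
  have e2 : (p:ℝ) + 2 = (p + 1) + 1 := by ring
  rw [e2, Real.Gamma_add_one (by positivity : (0:ℝ) < p+1).ne']
  have g1 := (Real.Gamma_pos_of_pos (by positivity : (0:ℝ) < p+1)).ne'
  have g2 := (Real.Gamma_pos_of_pos h1).ne'
  have g3 := (Real.Gamma_pos_of_pos (by positivity : (0:ℝ) < p+1+j)).ne'
  field_simp

lemma kA (p : ℝ) (hp : 0 < p) (j : ℕ) :
    ((p+2)+(j:ℝ)) * hgc (p+1) (p+2) (j+1) = hgc (p+2) (p+2) j / (p+1) := by
  unfold hgc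
  have h2 : (0:ℝ) < p + 2 + j := by positivity
  have e1 : p + 1 + ((j+1:ℕ):ℝ) = p + 2 + j := by push_cast; ring
  have e2 : p + 2 + ((j+1:ℕ):ℝ) = (p + 2 + j) + 1 := by push_cast; ring
  rw [e1, e2, Real.Gamma_add_one h2.ne']
  have e3 : (p:ℝ) + 2 = (p + 1) + 1 := by ring
  rw [e3, Real.Gamma_add_one (by positivity : (0:ℝ) < p+1).ne']
  have g1 := (Real.Gamma_pos_of_pos (by positivity : (0:ℝ) < p+1)).ne'
  have g2 := (Real.Gamma_pos_of_pos h2).ne'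
  have e4 : p + 1 + 1 + (j:ℝ) = p + 2 + j := by ring
  rw [e4]
  field_simp


-- z * (derivative series of hgc a b) = ∑' j, j * hgc j * z^j
lemma z_mul_deriv (a b z : ℝ) (ha : 0 < a) (hb : 0 < b) :
    z * (∑' j : ℕ, ((j:ℝ)+1) * hgc a b (j+1) * z ^ j) =
      ∑' j : ℕ, (j:ℝ) * hgc a b j * z ^ j := by
  rw [← tsum_mul_left]
  rw [Summable.tsum_eq_zero_add (summable_j_mul a b z ha hb)]
  simp only [Nat.cast_zero, zero_mul, zero_add]
  apply tsum_congr
  intro j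
  push_cast
  ring

lemma idB (p z : ℝ) (hp : 0 < p) :
    (p+1) * oneF2 (p+2) (p+2) z
      + z * (∑' j : ℕ, ((j:ℝ)+1) * hgc (p+2) (p+2) (j+1) * z ^ j)
      = (p+1) * oneF2 (p+1) (p+2) z := by
  have hb2 : (0:ℝ) < p+2 := by linarith
  have hb1 : (0:ℝ) < p+1 := by linarith
  rw [z_mul_deriv _ _ _ hb2 hb2, oneF2_eq, oneF2_eq, ← tsum_mul_left,
    ← Summable.tsum_add ((summable_hgc_mul_pow (p+2) (p+2) z hb2 hb2).mul_left (p+1))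
      (summable_j_mul (p+2) (p+2) z hb2 hb2), ← tsum_mul_left]
  apply tsum_congr
  intro j
  have h := kB p hp j
  linear_combination z ^ j * h

lemma idA (p z : ℝ) (hp : 0 < p) :
    (p+1) * oneF2 (p+1) (p+2) z
      + z * (∑' j : ℕ, ((j:ℝ)+1) * hgc (p+1) (p+2) (j+1) * z ^ j)
      = (p+1) + z * oneF2 (p+2) (p+2) z / (p+1) := by
  have hb2 : (0:ℝ) < p+2 := by linarith
  have hb1 : (0:ℝ) < p+1 := by linarith
  have hsum : Summable (fun j : ℕ => ((p+1)+(j:ℝ)) * hgc (p+1) (p+2) j * z ^ j) := by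
    apply Summable.congr (((summable_hgc_mul_pow (p+1) (p+2) z hb1 hb2).mul_left (p+1)).add
      (summable_j_mul (p+1) (p+2) z hb1 hb2))
    intro j; ring
  have lhs_eq : (p+1) * oneF2 (p+1) (p+2) z
      + z * (∑' j : ℕ, ((j:ℝ)+1) * hgc (p+1) (p+2) (j+1) * z ^ j)
      = ∑' j : ℕ, ((p+1)+(j:ℝ)) * hgc (p+1) (p+2) j * z ^ j := by
    rw [z_mul_deriv _ _ _ hb1 hb2, oneF2_eq, ← tsum_mul_left,
      ← Summable.tsum_add ((summable_hgc_mul_pow (p+1) (p+2) z hb1 hb2).mul_left (p+1))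
        (summable_j_mul (p+1) (p+2) z hb1 hb2)]
    apply tsum_congr
    intro j; ring
  rw [lhs_eq, Summable.tsum_eq_zero_add hsum]
  simp only [Nat.cast_zero, add_zero, pow_zero, mul_one, hgc_zero (p+1) (p+2) hb1 hb2]
  congr 1
  have step : ∀ j : ℕ, ((p+1)+((j+1:ℕ):ℝ)) * hgc (p+1) (p+2) (j+1) * z ^ (j+1)
      = (z/(p+1)) * (hgc (p+2) (p+2) j * z ^ j) := by
    intro j
    have h := kA p hp j
    have : (p+1)+((j+1:ℕ):ℝ) = (p+2)+(j:ℝ) := by push_cast; ring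
    rw [this, pow_succ]
    linear_combination (z ^ j * z) * h
  calc (∑' j : ℕ, ((p+1)+((j+1:ℕ):ℝ)) * hgc (p+1) (p+2) (j+1) * z ^ (j+1))
      = ∑' j : ℕ, (z/(p+1)) * (hgc (p+2) (p+2) j * z ^ j) := tsum_congr step
    _ = (z/(p+1)) * ∑' j : ℕ, hgc (p+2) (p+2) j * z ^ j := tsum_mul_left
    _ = z * oneF2 (p+2) (p+2) z / (p+1) := by rw [oneF2_eq]; ring

theorem stmt_1 (p : ℝ) (hp : 0 < p) :
    ∀ z : ℝ, 0 < z →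
      HasDerivAt (fun z : ℝ =>
          z ^ (p + 1) * besselK 0 (2 * Real.sqrt z) * oneF2 (p + 1) (p + 2) z / (p + 1)
          + z ^ (p + 3 / 2) * besselK 1 (2 * Real.sqrt z) * oneF2 (p + 2) (p + 2) z
              / (p + 1) ^ 2)
        (z ^ p * besselK 0 (2 * Real.sqrt z)) z := by
  intro z hz
  have hb1 : (0:ℝ) < p + 1 := by linarith
  have hb2 : (0:ℝ) < p + 2 := by linarith
  have hs : 0 < Real.sqrt z := Real.sqrt_pos.2 hz
  have h2s : 0 < 2 * Real.sqrt z := by positivity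
  have hs2 : Real.sqrt z * Real.sqrt z = z := Real.mul_self_sqrt hz.le
  -- derivative pieces
  have hK0 : HasDerivAt (fun x : ℝ => besselK 0 (2 * Real.sqrt x))
      (-besselK 1 (2 * Real.sqrt z) * (2 * (1 / (2 * Real.sqrt z)))) z :=
    HasDerivAt.comp z (h := fun y : ℝ => 2 * Real.sqrt y) (besselK_deriv_zero (2 * Real.sqrt z) h2s)
      ((Real.hasDerivAt_sqrt hz.ne').const_mul 2)
  have hK1 : HasDerivAt (fun x : ℝ => besselK 1 (2 * Real.sqrt x))
      ((-(besselK 0 (2 * Real.sqrt z) + besselK 1 (2 * Real.sqrt z) / (2 * Real.sqrt z)))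
        * (2 * (1 / (2 * Real.sqrt z)))) z :=
    HasDerivAt.comp z (h := fun y : ℝ => 2 * Real.sqrt y) (besselK_deriv_one (2 * Real.sqrt z) h2s)
      ((Real.hasDerivAt_sqrt hz.ne').const_mul 2)
  have hA := oneF2_hasDerivAt (p+1) (p+2) z hb1 hb2
  have hB := oneF2_hasDerivAt (p+2) (p+2) z hb2 hb2
  set DA := ∑' j : ℕ, ((j:ℝ)+1) * hgc (p+1) (p+2) (j+1) * z ^ j with hDAdef
  set DB := ∑' j : ℕ, ((j:ℝ)+1) * hgc (p+2) (p+2) (j+1) * z ^ j with hDBdef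
  have hidA : (p+1) * oneF2 (p+1) (p+2) z + z * DA
      = (p+1) + z * oneF2 (p+2) (p+2) z / (p+1) := idA p z hp
  have hidB : (p+1) * oneF2 (p+2) (p+2) z + z * DB
      = (p+1) * oneF2 (p+1) (p+2) z := idB p z hp
  have hpow1 : HasDerivAt (fun x : ℝ => x ^ (p+1)) ((p+1) * z ^ p) z := by
    have := Real.hasDerivAt_rpow_const (x := z) (p := p+1) (Or.inl hz.ne')
    rwa [show p + 1 - 1 = p by ring] at this
  have hpow2 : HasDerivAt (fun x : ℝ => x ^ (p+3/2)) ((p+3/2) * z ^ (p+1/2)) z := by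
    have := Real.hasDerivAt_rpow_const (x := z) (p := p+3/2) (Or.inl hz.ne')
    rwa [show p + 3/2 - 1 = p + 1/2 by ring] at this
  have htot := (((hpow1.mul hK0).mul hA).div_const (p+1)).add
    (((hpow2.mul hK1).mul hB).div_const ((p+1)^2))
  apply htot.congr_deriv
  -- rpow arithmetic
  have e1 : z ^ (p+1) = z ^ p * z := by
    rw [Real.rpow_add hz, Real.rpow_one]
  have e2 : z ^ (p+3/2 : ℝ) = z ^ p * z * Real.sqrt z := by
    rw [show p + 3/2 = (p+1) + (1/2 : ℝ) by ring, Real.rpow_add hz, e1,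
      ← Real.sqrt_eq_rpow]
  have e3 : z ^ (p+1/2 : ℝ) = z ^ p * Real.sqrt z := by
    rw [show p + 1/2 = p + (1/2 : ℝ) by ring, Real.rpow_add hz, ← Real.sqrt_eq_rpow]
  set A := oneF2 (p+1) (p+2) z
  set B := oneF2 (p+2) (p+2) z
  have hDA : DA = ((p+1) + z * B / (p+1) - (p+1) * A) / z := by
    field_simp at hidA ⊢
    linarith
  have hDB : DB = ((p+1) * A - (p+1) * B) / z := by
    field_simp at hidB ⊢
    linarith
  simp only [Pi.mul_apply]
  rw [e1, e2, e3, hDA, hDB]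
  have hzne := hz.ne'
  have hsne := hs.ne'
  have hbne := hb1.ne'
  set s := Real.sqrt z with hsdef
  set zp := z ^ p with hzpdef
  rw [← hs2]
  field_simp
  ring
end pieces
end

section
/- For m > 1/2, ∫_0^{ζ²} z^{m-1} K_0(2√z) dz = ζ^{2m} K_0(2ζ) ₁F₂(1; m, m+1; ζ²)/m + ζ^{2m+1} K_1(2ζ) ₁F₂(1; m+1, m+1; ζ²)/m², for any ζ > 0. -/
open Real Filter Set MeasureTheory

open Topology

namespace StmtAux

lemma self_le_cosh {u : ℝ} (hu : 0 ≤ u) : u ≤ Real.cosh u :=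
  le_trans (Real.self_le_sinh_iff.mpr hu) (Real.sinh_lt_cosh u).le

lemma cosh_pow_mul_exp_le {x u : ℝ} (hx : 0 < x) (hu : 0 ≤ u) (n : ℕ) :
    Real.cosh u ^ n * Real.exp (-x * Real.cosh u)
      ≤ (n.factorial * (2 / x) ^ n) * Real.exp (-(x / 2) * u) := by
  have h1 : (1 : ℝ) ≤ Real.cosh u := Real.one_le_cosh u
  set t : ℝ := x / 2 * Real.cosh u with ht_def
  have ht : (0 : ℝ) ≤ t := by positivity
  have h2 : t ^ n / n.factorial ≤ Real.exp t := Real.pow_div_factorial_le_exp _ ht n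
  have hfac : (0:ℝ) < n.factorial := by positivity
  have h3 : t ^ n ≤ n.factorial * Real.exp t := by
    rw [div_le_iff₀ hfac] at h2; linarith [h2]
  have key : Real.cosh u ^ n * Real.exp (-t) ≤ n.factorial * (2 / x) ^ n := by
    rw [Real.exp_neg, mul_inv_le_iff₀ (Real.exp_pos _)]
    have : Real.cosh u ^ n = (2 / x) ^ n * t ^ n := by
      rw [ht_def, mul_pow, ← mul_assoc, ← mul_pow]
      field_simp
      simp
    rw [this]
    calc (2 / x) ^ n * t ^ n ≤ (2 / x) ^ n * (n.factorial * Real.exp t) := by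
          gcongr
      _ = n.factorial * (2 / x) ^ n * Real.exp t := by ring
  have hsplit : Real.exp (-x * Real.cosh u) = Real.exp (-t) * Real.exp (-t) := by
    rw [← Real.exp_add, ht_def]; ring_nf
  calc Real.cosh u ^ n * Real.exp (-x * Real.cosh u)
      = (Real.cosh u ^ n * Real.exp (-t)) * Real.exp (-t) := by rw [hsplit]; ring
    _ ≤ (n.factorial * (2 / x) ^ n) * Real.exp (-(x/2) * u) := by
        apply mul_le_mul key ?_ (Real.exp_pos _).le (by positivity)
        apply Real.exp_le_exp.mpr
        rw [ht_def]
        have := self_le_cosh hu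
        nlinarith

lemma integrableOn_cosh_pow_exp {x : ℝ} (hx : 0 < x) (n : ℕ) :
    IntegrableOn (fun u => Real.exp (-x * Real.cosh u) * Real.cosh u ^ n) (Ioi (0:ℝ)) := by
  have hbig : IntegrableOn (fun u => (n.factorial * (2 / x) ^ n) * Real.exp (-(x / 2) * u))
      (Ioi (0:ℝ)) := (exp_neg_integrableOn_Ioi 0 (by positivity)).const_mul _
  refine hbig.mono' ?_ ?_
  · exact (((Real.continuous_exp.comp (continuous_const.mul Real.continuous_cosh)).mul
      (Real.continuous_cosh.pow n))).aestronglyMeasurable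
  · filter_upwards [ae_restrict_mem measurableSet_Ioi] with u hu
    have hu0 : (0:ℝ) ≤ u := (le_of_lt hu)
    rw [Real.norm_eq_abs, abs_of_nonneg (by positivity)]
    calc Real.exp (-x * Real.cosh u) * Real.cosh u ^ n
        = Real.cosh u ^ n * Real.exp (-x * Real.cosh u) := by ring
      _ ≤ _ := cosh_pow_mul_exp_le hx hu0 n


lemma besselK0_eq (x : ℝ) : besselK 0 x = ∫ u in Ioi (0:ℝ), Real.exp (-x * Real.cosh u) := by
  simp [besselK]

lemma besselK1_eq (x : ℝ) : besselK 1 x = ∫ u in Ioi (0:ℝ),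
    Real.exp (-x * Real.cosh u) * Real.cosh u := by
  simp [besselK]

lemma integrable_K0 {x : ℝ} (hx : 0 < x) :
    IntegrableOn (fun u => Real.exp (-x * Real.cosh u)) (Ioi (0:ℝ)) := by
  simpa using integrableOn_cosh_pow_exp hx 0

lemma integrable_K1 {x : ℝ} (hx : 0 < x) :
    IntegrableOn (fun u => Real.exp (-x * Real.cosh u) * Real.cosh u) (Ioi (0:ℝ)) := by
  simpa using integrableOn_cosh_pow_exp hx 1

lemma integrable_K2 {x : ℝ} (hx : 0 < x) :
    IntegrableOn (fun u => Real.exp (-x * Real.cosh u) * Real.cosh u ^ 2) (Ioi (0:ℝ)) :=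
  integrableOn_cosh_pow_exp hx 2

lemma integral_exp_neg_mul (b : ℝ) (hb : 0 < b) :
    (∫ u in Ioi (0:ℝ), Real.exp (-b * u)) = 1 / b := by
  have := integral_comp_mul_left_Ioi (fun y => Real.exp (-y)) 0 hb
  simp only [mul_zero] at this
  simp only [neg_mul]
  rw [show (fun u => Real.exp (-(b * u))) = fun u => Real.exp (-(b * u)) from rfl]
  calc (∫ u in Ioi (0:ℝ), Real.exp (-(b * u))) = b⁻¹ • ∫ x in Ioi (0:ℝ), Real.exp (-x) := this
    _ = 1 / b := by rw [integral_exp_neg_Ioi_zero]; simp [one_div]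

lemma besselK_nonneg (t x : ℝ) : 0 ≤ besselK t x := by
  apply setIntegral_nonneg measurableSet_Ioi
  intro u _
  positivity

lemma besselK0_le {x : ℝ} (hx : 0 < x) : besselK 0 x ≤ 1 / x := by
  rw [besselK0_eq, ← integral_exp_neg_mul x hx]
  apply setIntegral_mono_on (integrable_K0 hx)
    ((exp_neg_integrableOn_Ioi 0 hx))
    measurableSet_Ioi
  intro u hu
  apply Real.exp_le_exp.mpr
  have := self_le_cosh (le_of_lt hu)
  nlinarith

lemma besselK1_le {x : ℝ} (hx : 0 < x) : besselK 1 x ≤ 4 / x ^ 2 := by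
  rw [besselK1_eq]
  have hbd : ∀ u ∈ Ioi (0:ℝ), Real.exp (-x * Real.cosh u) * Real.cosh u
      ≤ (2 / x) * Real.exp (-(x/2) * u) := by
    intro u hu
    have hu0 : (0:ℝ) ≤ u := le_of_lt hu
    have h1 : (1:ℝ) ≤ Real.cosh u := Real.one_le_cosh u
    -- cosh u * exp(-(x/2) cosh u) ≤ 2/x  via t ≤ exp t
    set t : ℝ := x / 2 * Real.cosh u with htdef
    have ht : t ≤ Real.exp t := by
      have := Real.add_one_le_exp t
      linarith
    have key : Real.cosh u * Real.exp (-(x/2) * Real.cosh u) ≤ 2 / x := by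
      have : -(x/2) * Real.cosh u = -t := by rw [htdef]; ring
      rw [this, Real.exp_neg, mul_inv_le_iff₀ (Real.exp_pos _), div_mul_eq_mul_div,
        le_div_iff₀ hx]
      have hcosh : Real.cosh u * x = 2 * t := by rw [htdef]; ring
      rw [hcosh]
      linarith
    have hsplit : Real.exp (-x * Real.cosh u)
        = Real.exp (-(x/2) * Real.cosh u) * Real.exp (-(x/2) * Real.cosh u) := by
      rw [← Real.exp_add]; ring_nf
    calc Real.exp (-x * Real.cosh u) * Real.cosh u
        = (Real.cosh u * Real.exp (-(x/2) * Real.cosh u)) * Real.exp (-(x/2) * Real.cosh u) := by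
          rw [hsplit]; ring
      _ ≤ (2 / x) * Real.exp (-(x/2) * u) := by
          apply mul_le_mul key ?_ (Real.exp_pos _).le (by positivity)
          exact Real.exp_le_exp.mpr (by nlinarith [self_le_cosh hu0])
  calc (∫ u in Ioi (0:ℝ), Real.exp (-x * Real.cosh u) * Real.cosh u)
      ≤ ∫ u in Ioi (0:ℝ), (2 / x) * Real.exp (-(x/2) * u) := by
        apply setIntegral_mono_on (integrable_K1 hx)
          ((exp_neg_integrableOn_Ioi 0 (by positivity)).const_mul _) measurableSet_Ioi hbd
    _ = (2 / x) * (1 / (x / 2)) := by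
        rw [integral_const_mul, integral_exp_neg_mul _ (by positivity)]
    _ = 4 / x ^ 2 := by field_simp; ring


lemma integrable_sinh2 {x : ℝ} (hx : 0 < x) :
    IntegrableOn (fun u => Real.exp (-x * Real.cosh u) * Real.sinh u ^ 2) (Ioi (0:ℝ)) := by
  refine (integrable_K2 hx).mono' ?_ ?_
  · exact ((Real.continuous_exp.comp (continuous_const.mul Real.continuous_cosh)).mul
      (Real.continuous_sinh.pow 2)).aestronglyMeasurable
  · filter_upwards with u
    rw [Real.norm_eq_abs, abs_of_nonneg (by positivity)]
    have h := Real.sinh_lt_cosh u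
    have h2 : Real.sinh u ^ 2 ≤ Real.cosh u ^ 2 := by
      rw [Real.cosh_sq]; nlinarith
    have := Real.exp_pos (-x * Real.cosh u)
    nlinarith

lemma exp_deriv_aux (c y : ℝ) :
    HasDerivAt (fun y : ℝ => Real.exp (-y * c)) (-c * Real.exp (-y * c)) y := by
  have h1 : HasDerivAt (fun y : ℝ => -y * c) (-c) y := by
    simpa using ((hasDerivAt_id y).neg.mul_const c)
  exact ((Real.hasDerivAt_exp (-y * c)).comp y h1).congr_deriv
    (by ring : Real.exp (-y * c) * -c = -c * Real.exp (-y * c))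

lemma hasDerivAt_besselK0 {x : ℝ} (hx : 0 < x) :
    HasDerivAt (fun y => besselK 0 y) (-besselK 1 x) x := by
  have heq : (fun y => besselK 0 y) = fun y => ∫ u in Ioi (0:ℝ),
      Real.exp (-y * Real.cosh u) := funext besselK0_eq
  rw [heq, besselK1_eq]
  have key := hasDerivAt_integral_of_dominated_loc_of_deriv_le
    (F := fun y u => Real.exp (-y * Real.cosh u))
    (F' := fun y u => -Real.cosh u * Real.exp (-y * Real.cosh u))
    (x₀ := x) (s := Metric.ball x (x/2))
    (μ := volume.restrict (Ioi (0:ℝ)))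
    (bound := fun u => Real.exp (-(x/2) * Real.cosh u) * Real.cosh u)
    (Metric.ball_mem_nhds x (by positivity)) ?_ (integrable_K0 hx) ?_ ?_ (integrable_K1 (by positivity)) ?_
  · refine key.2.congr_deriv ?_
    symm
    rw [← integral_neg]
    apply setIntegral_congr_fun measurableSet_Ioi
    intro u _
    show -(Real.exp (-x * Real.cosh u) * Real.cosh u) = -Real.cosh u * Real.exp (-x * Real.cosh u)
    ring
  · filter_upwards with y
    exact (Real.continuous_exp.comp
      (continuous_const.mul Real.continuous_cosh)).aestronglyMeasurable
  · exact (Real.continuous_cosh.neg.mul (Real.continuous_exp.comp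
      (continuous_const.mul Real.continuous_cosh))).aestronglyMeasurable
  · filter_upwards with u y hy
    rw [Metric.mem_ball, Real.dist_eq] at hy
    have hy2 : x/2 < y := by
      have := abs_lt.mp hy
      linarith [this.1]
    have hc : (0:ℝ) < Real.cosh u := Real.cosh_pos u
    rw [Real.norm_eq_abs, abs_of_nonpos (by nlinarith [Real.exp_pos (-y * Real.cosh u)]),
      neg_mul, neg_neg]
    have : Real.exp (-y * Real.cosh u) ≤ Real.exp (-(x/2) * Real.cosh u) :=
      Real.exp_le_exp.mpr (by nlinarith)
    nlinarith [Real.exp_pos (-y * Real.cosh u)]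
  · filter_upwards with u y _
    exact exp_deriv_aux (Real.cosh u) y

lemma hasDerivAt_besselK1_aux {x : ℝ} (hx : 0 < x) :
    HasDerivAt (fun y => besselK 1 y)
      (-∫ u in Ioi (0:ℝ), Real.exp (-x * Real.cosh u) * Real.cosh u ^ 2) x := by
  have heq : (fun y => besselK 1 y) = fun y => ∫ u in Ioi (0:ℝ),
      Real.exp (-y * Real.cosh u) * Real.cosh u := funext besselK1_eq
  rw [heq]
  have key := hasDerivAt_integral_of_dominated_loc_of_deriv_le
    (F := fun y u => Real.exp (-y * Real.cosh u) * Real.cosh u)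
    (F' := fun y u => -Real.cosh u * Real.exp (-y * Real.cosh u) * Real.cosh u)
    (x₀ := x) (s := Metric.ball x (x/2))
    (μ := volume.restrict (Ioi (0:ℝ)))
    (bound := fun u => Real.exp (-(x/2) * Real.cosh u) * Real.cosh u ^ 2)
    (Metric.ball_mem_nhds x (by positivity)) ?_ (integrable_K1 hx) ?_ ?_ (integrable_K2 (by positivity)) ?_
  · refine key.2.congr_deriv ?_
    symm
    rw [← integral_neg]
    apply setIntegral_congr_fun measurableSet_Ioi
    intro u _
    show -(Real.exp (-x * Real.cosh u) * Real.cosh u ^ 2)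
        = -Real.cosh u * Real.exp (-x * Real.cosh u) * Real.cosh u
    ring
  · filter_upwards with y
    exact ((Real.continuous_exp.comp
      (continuous_const.mul Real.continuous_cosh)).mul Real.continuous_cosh).aestronglyMeasurable
  · exact ((Real.continuous_cosh.neg.mul (Real.continuous_exp.comp
      (continuous_const.mul Real.continuous_cosh))).mul
      Real.continuous_cosh).aestronglyMeasurable
  · filter_upwards with u y hy
    rw [Metric.mem_ball, Real.dist_eq] at hy
    have hy2 : x/2 < y := by
      have := abs_lt.mp hy
      linarith [this.1]
    have hc : (0:ℝ) < Real.cosh u := Real.cosh_pos u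
    have hle : Real.exp (-y * Real.cosh u) ≤ Real.exp (-(x/2) * Real.cosh u) :=
      Real.exp_le_exp.mpr (by nlinarith)
    rw [Real.norm_eq_abs]
    have : |(-Real.cosh u * Real.exp (-y * Real.cosh u) * Real.cosh u)|
        = Real.exp (-y * Real.cosh u) * Real.cosh u ^ 2 := by
      rw [abs_of_nonpos (by nlinarith [mul_pos (mul_pos hc (Real.exp_pos (-y * Real.cosh u))) hc])]
      ring
    rw [this]
    nlinarith [Real.exp_pos (-y * Real.cosh u), sq_nonneg (Real.cosh u)]
  · filter_upwards with u y _
    exact (exp_deriv_aux (Real.cosh u) y).mul_const _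

lemma ibp_sinh2 {x : ℝ} (hx : 0 < x) :
    (∫ u in Ioi (0:ℝ), Real.exp (-x * Real.cosh u) * Real.sinh u ^ 2)
      = (1/x) * ∫ u in Ioi (0:ℝ), Real.exp (-x * Real.cosh u) * Real.cosh u := by
  have hx' : x ≠ 0 := ne_of_gt hx
  set f : ℝ → ℝ := fun u => (1/x) * Real.sinh u * Real.exp (-x * Real.cosh u) with hf
  set f' : ℝ → ℝ := fun u => (1/x) * (Real.exp (-x * Real.cosh u) * Real.cosh u)
    - Real.exp (-x * Real.cosh u) * Real.sinh u ^ 2 with hf'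
  have hderiv : ∀ u ∈ Ici (0:ℝ), HasDerivAt f (f' u) u := by
    intro u _
    have h1 : HasDerivAt (fun u => (1/x) * Real.sinh u) ((1/x) * Real.cosh u) u :=
      (Real.hasDerivAt_sinh u).const_mul _
    have hc : HasDerivAt (fun u => -x * Real.cosh u) (-x * Real.sinh u) u :=
      (Real.hasDerivAt_cosh u).const_mul _
    have h2 : HasDerivAt (fun u => Real.exp (-x * Real.cosh u))
        (Real.exp (-x * Real.cosh u) * (-x * Real.sinh u)) u :=
      (Real.hasDerivAt_exp _).comp u hc
    have h3 := h1.mul h2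
    have heq : (1/x) * Real.cosh u * Real.exp (-x * Real.cosh u)
        + (1/x) * Real.sinh u * (Real.exp (-x * Real.cosh u) * (-x * Real.sinh u)) = f' u := by
      rw [hf']
      field_simp
      ring
    rw [heq] at h3
    exact h3
  have hint : IntegrableOn f' (Ioi (0:ℝ)) := by
    rw [hf']
    exact ((integrable_K1 hx).const_mul _).sub (integrable_sinh2 hx)
  have htend : Tendsto f atTop (𝓝 0) := by
    have hb : ∀ᶠ u in atTop, ‖f u‖ ≤ (1/x) * ((2/x) * Real.exp (-(x/2) * u)) := by
      filter_upwards [eventually_ge_atTop (0:ℝ)] with u hu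
      have h1 : (1:ℝ) ≤ Real.cosh u := Real.one_le_cosh u
      have hsh : 0 ≤ Real.sinh u := le_trans hu (Real.self_le_sinh_iff.mpr hu)
      have hsc : Real.sinh u ≤ Real.cosh u := (Real.sinh_lt_cosh u).le
      rw [hf, Real.norm_eq_abs]
      rw [abs_of_nonneg (by positivity)]
      have key : Real.cosh u * Real.exp (-x * Real.cosh u) ≤ (2/x) * Real.exp (-(x/2) * u) := by
        set t : ℝ := x / 2 * Real.cosh u with htdef
        have ht : t ≤ Real.exp t := by
          have := Real.add_one_le_exp t; linarith
        have hsplit : Real.exp (-x * Real.cosh u) = Real.exp (-t) * Real.exp (-t) := by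
          rw [← Real.exp_add, htdef]; ring_nf
        have key1 : Real.cosh u * Real.exp (-t) ≤ 2 / x := by
          rw [Real.exp_neg, mul_inv_le_iff₀ (Real.exp_pos _), div_mul_eq_mul_div,
            le_div_iff₀ hx]
          have hct : Real.cosh u * x = 2 * t := by rw [htdef]; ring
          rw [hct]; linarith
        calc Real.cosh u * Real.exp (-x * Real.cosh u)
            = (Real.cosh u * Real.exp (-t)) * Real.exp (-t) := by rw [hsplit]; ring
          _ ≤ (2/x) * Real.exp (-(x/2) * u) := by
              apply mul_le_mul key1 ?_ (Real.exp_pos _).le (by positivity)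
              apply Real.exp_le_exp.mpr
              rw [htdef]
              nlinarith [self_le_cosh hu]
      calc (1/x) * Real.sinh u * Real.exp (-x * Real.cosh u)
          ≤ (1/x) * (Real.cosh u * Real.exp (-x * Real.cosh u)) := by
            have := Real.exp_pos (-x * Real.cosh u)
            rw [mul_assoc]
            gcongr
        _ ≤ (1/x) * ((2/x) * Real.exp (-(x/2) * u)) := by gcongr
    have hlim : Tendsto (fun u => (1/x) * ((2/x) * Real.exp (-(x/2) * u))) atTop (𝓝 0) := by
      have h0 : Tendsto (fun u : ℝ => Real.exp (-(x/2) * u)) atTop (𝓝 0) := by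
        apply Real.tendsto_exp_atBot.comp
        exact Tendsto.const_mul_atTop_of_neg (by linarith : -(x/2) < 0) tendsto_id
      have := (h0.const_mul ((1/x) * (2/x)))
      simpa [mul_assoc] using this
    exact squeeze_zero_norm' hb hlim
  have hftc := integral_Ioi_of_hasDerivAt_of_tendsto' (f := f) (f' := f') (a := 0)
    (fun u hu => hderiv u hu) hint htend
  have hf0 : f 0 = 0 := by simp [hf]
  rw [hf0, sub_zero] at hftc
  have hsub := integral_sub ((integrable_K1 hx).const_mul (1/x)) (integrable_sinh2 hx)
  rw [hf'] at hftc
  rw [hftc] at hsub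
  rw [MeasureTheory.integral_const_mul] at hsub
  linarith [hsub.symm]

lemma hasDerivAt_besselK1 {x : ℝ} (hx : 0 < x) :
    HasDerivAt (fun y => besselK 1 y) (-besselK 0 x - besselK 1 x / x) x := by
  have h := hasDerivAt_besselK1_aux hx
  have heq : (∫ u in Ioi (0:ℝ), Real.exp (-x * Real.cosh u) * Real.cosh u ^ 2)
      = besselK 0 x + besselK 1 x / x := by
    have hsplit : (∫ u in Ioi (0:ℝ), Real.exp (-x * Real.cosh u) * Real.cosh u ^ 2)
        = ∫ u in Ioi (0:ℝ), (Real.exp (-x * Real.cosh u)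
          + Real.exp (-x * Real.cosh u) * Real.sinh u ^ 2) := by
      apply setIntegral_congr_fun measurableSet_Ioi
      intro u _
      simp only [Real.cosh_sq]
      ring
    rw [hsplit, integral_add (integrable_K0 hx) (integrable_sinh2 hx), ibp_sinh2 hx,
      ← besselK0_eq, ← besselK1_eq]
    ring
  rw [heq] at h
  convert h using 1
  ring

lemma sqrt_deriv2 {z : ℝ} (hz : 0 < z) :
    HasDerivAt (fun w : ℝ => 2 * Real.sqrt w) (1 / Real.sqrt z) z := by
  have h := (Real.hasDerivAt_sqrt (ne_of_gt hz)).const_mul 2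
  have hs : Real.sqrt z ≠ 0 := by positivity
  refine h.congr_deriv ?_
  field_simp

lemma hasDerivAt_A {z : ℝ} (hz : 0 < z) :
    HasDerivAt (fun w => besselK 0 (2 * Real.sqrt w))
      (-(Real.sqrt z * besselK 1 (2 * Real.sqrt z)) / z) z := by
  have hs : (0:ℝ) < Real.sqrt z := Real.sqrt_pos.mpr hz
  have h2s : (0:ℝ) < 2 * Real.sqrt z := by positivity
  have h := (hasDerivAt_besselK0 h2s).comp z (sqrt_deriv2 hz)
  refine h.congr_deriv ?_
  have hzz : Real.sqrt z * Real.sqrt z = z := Real.mul_self_sqrt hz.le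
  field_simp
  linear_combination besselK 1 (2 * Real.sqrt z) * hzz

lemma hasDerivAt_B {z : ℝ} (hz : 0 < z) :
    HasDerivAt (fun w => Real.sqrt w * besselK 1 (2 * Real.sqrt w))
      (-besselK 0 (2 * Real.sqrt z)) z := by
  have hs : (0:ℝ) < Real.sqrt z := Real.sqrt_pos.mpr hz
  have h2s : (0:ℝ) < 2 * Real.sqrt z := by positivity
  have h1 : HasDerivAt (fun w : ℝ => Real.sqrt w) (1 / (2 * Real.sqrt z)) z :=
    Real.hasDerivAt_sqrt (ne_of_gt hz)
  have h2 : HasDerivAt (fun w => besselK 1 (2 * Real.sqrt w))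
      ((-besselK 0 (2 * Real.sqrt z) - besselK 1 (2 * Real.sqrt z) / (2 * Real.sqrt z))
        * (1 / Real.sqrt z)) z :=
    by have h := (hasDerivAt_besselK1 h2s).comp z (sqrt_deriv2 hz); exact h
  have h := h1.mul h2
  have hs' : Real.sqrt z ≠ 0 := ne_of_gt hs
  have heq : 1 / (2 * Real.sqrt z) * besselK 1 (2 * Real.sqrt z)
      + Real.sqrt z * ((-besselK 0 (2 * Real.sqrt z)
        - besselK 1 (2 * Real.sqrt z) / (2 * Real.sqrt z)) * (1 / Real.sqrt z))
      = -besselK 0 (2 * Real.sqrt z) := by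
    field_simp
    ring
  rw [heq] at h
  exact h

lemma continuousAt_A {z : ℝ} (hz : 0 < z) :
    ContinuousAt (fun w => besselK 0 (2 * Real.sqrt w)) z := (hasDerivAt_A hz).continuousAt

lemma continuousAt_B {z : ℝ} (hz : 0 < z) :
    ContinuousAt (fun w => Real.sqrt w * besselK 1 (2 * Real.sqrt w)) z :=
  (hasDerivAt_B hz).continuousAt

lemma rpow_tendsto_zero {q : ℝ} (hq : 0 < q) :
    Tendsto (fun z : ℝ => z ^ q) (𝓝[>] (0:ℝ)) (𝓝 0) := by
  have h := (Real.continuousAt_rpow_const 0 q (Or.inr hq.le)).tendsto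
  rw [Real.zero_rpow (ne_of_gt hq)] at h
  exact h.mono_left nhdsWithin_le_nhds

lemma tendsto_pow_A {p : ℝ} (hp : 1/2 < p) :
    Tendsto (fun z : ℝ => z ^ p * besselK 0 (2 * Real.sqrt z)) (𝓝[>] (0:ℝ)) (𝓝 0) := by
  apply squeeze_zero' (g := fun z => z ^ (p - 1/2) / 2)
  · filter_upwards [self_mem_nhdsWithin] with z hz
    have hz' : (0:ℝ) < z := hz
    have hK := besselK_nonneg 0 (2 * Real.sqrt z)
    positivity
  · filter_upwards [self_mem_nhdsWithin] with z hz
    have hz' : (0:ℝ) < z := hz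
    have hs : (0:ℝ) < Real.sqrt z := Real.sqrt_pos.mpr hz'
    have hb := besselK0_le (x := 2 * Real.sqrt z) (by positivity)
    have h1 : z ^ p * besselK 0 (2 * Real.sqrt z) ≤ z ^ p * (1 / (2 * Real.sqrt z)) := by
      gcongr
    refine h1.trans (le_of_eq ?_)
    rw [Real.sqrt_eq_rpow, Real.rpow_sub hz']
    ring
  · have := rpow_tendsto_zero (q := p - 1/2) (by linarith)
    simpa using this.div_const 2

lemma tendsto_pow_B {p : ℝ} (hp : 1/2 < p) :
    Tendsto (fun z : ℝ => z ^ p * (Real.sqrt z * besselK 1 (2 * Real.sqrt z)))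
      (𝓝[>] (0:ℝ)) (𝓝 0) := by
  apply squeeze_zero' (g := fun z => z ^ (p - 1/2))
  · filter_upwards [self_mem_nhdsWithin] with z hz
    have hz' : (0:ℝ) < z := hz
    have := besselK_nonneg 1 (2 * Real.sqrt z)
    positivity
  · filter_upwards [self_mem_nhdsWithin] with z hz
    have hz' : (0:ℝ) < z := hz
    have hs : (0:ℝ) < Real.sqrt z := Real.sqrt_pos.mpr hz'
    have hb := besselK1_le (x := 2 * Real.sqrt z) (by positivity)
    have hzz : Real.sqrt z * Real.sqrt z = z := Real.mul_self_sqrt hz'.le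
    have hb2 : besselK 1 (2 * Real.sqrt z) ≤ 1 / z := by
      refine hb.trans (le_of_eq ?_)
      have hsq : (2 * Real.sqrt z) ^ 2 = 4 * z := by
        rw [mul_pow, Real.sq_sqrt hz'.le]; norm_num
      rw [hsq]
      field_simp
    have h1 : z ^ p * (Real.sqrt z * besselK 1 (2 * Real.sqrt z))
        ≤ z ^ p * (Real.sqrt z * (1 / z)) := by
      gcongr
    refine h1.trans (le_of_eq ?_)
    have h0 : z ^ ((1:ℝ)/2) ≠ 0 := by positivity
    have hzz2 : z ^ ((1:ℝ)/2) * z ^ ((1:ℝ)/2) = z := by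
      rw [← Real.rpow_add hz']; norm_num
    rw [Real.sqrt_eq_rpow, Real.rpow_sub hz']
    rw [show z ^ p * (z ^ ((1:ℝ)/2) * (1/z)) = z ^ p * z ^ ((1:ℝ)/2) / z by ring,
      div_eq_div_iff (ne_of_gt hz') h0]
    linear_combination z ^ p * hzz2
  · exact rpow_tendsto_zero (by linarith)

lemma integrableOn_pow_A {p X : ℝ} (hp : 1/2 < p) (hX : 0 < X) :
    IntegrableOn (fun z => z ^ (p - 1) * besselK 0 (2 * Real.sqrt z)) (Ioc (0:ℝ) X) := by
  have hmeas : AEStronglyMeasurable (fun z => z ^ (p - 1) * besselK 0 (2 * Real.sqrt z))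
      (volume.restrict (Ioc (0:ℝ) X)) := by
    apply ContinuousOn.aestronglyMeasurable ?_ measurableSet_Ioc
    intro z hz
    have hz' : (0:ℝ) < z := hz.1
    apply ContinuousWithinAt.mul
    · exact ((Real.continuousAt_rpow_const z (p-1) (Or.inl (ne_of_gt hz'))).continuousWithinAt)
    · exact (continuousAt_A hz').continuousWithinAt
  have hdom : IntegrableOn (fun z : ℝ => z ^ (p - 3/2) / 2) (Ioc (0:ℝ) X) := by
    have h := intervalIntegral.intervalIntegrable_rpow' (a := 0) (b := X) (r := p - 3/2) (by linarith)
    rw [intervalIntegrable_iff_integrableOn_Ioc_of_le hX.le] at h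
    exact h.div_const 2
  refine hdom.mono' hmeas ?_
  filter_upwards [ae_restrict_mem measurableSet_Ioc] with z hz
  have hz' : (0:ℝ) < z := hz.1
  have hs : (0:ℝ) < Real.sqrt z := Real.sqrt_pos.mpr hz'
  have hb := besselK0_le (x := 2 * Real.sqrt z) (by positivity)
  have hK := besselK_nonneg 0 (2 * Real.sqrt z)
  rw [Real.norm_eq_abs, abs_of_nonneg (by positivity)]
  calc z ^ (p-1) * besselK 0 (2 * Real.sqrt z) ≤ z ^ (p-1) * (1 / (2 * Real.sqrt z)) := by
        gcongr
    _ = z ^ (p - 3/2) / 2 := by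
        rw [show p - 3/2 = (p - 1) - 1/2 by ring, Real.sqrt_eq_rpow, Real.rpow_sub hz' (p-1) (1/2)]
        ring

lemma stepA {p X : ℝ} (hp : 1/2 < p) (hX : 0 < X) :
    ∫ z in Ioc (0:ℝ) X, z ^ (p - 1) * besselK 0 (2 * Real.sqrt z)
      = X ^ p * besselK 0 (2 * Real.sqrt X) / p
        + X ^ p * (Real.sqrt X * besselK 1 (2 * Real.sqrt X)) / p ^ 2
        + (1 / p ^ 2) * ∫ z in Ioc (0:ℝ) X, z ^ p * besselK 0 (2 * Real.sqrt z) := by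
  have hp0 : (0:ℝ) < p := by linarith
  set A : ℝ → ℝ := fun w => besselK 0 (2 * Real.sqrt w) with hA
  set B : ℝ → ℝ := fun w => Real.sqrt w * besselK 1 (2 * Real.sqrt w) with hB
  set h : ℝ → ℝ := fun z => z ^ p * A z / p + z ^ p * B z / p ^ 2 with hh
  set g : ℝ → ℝ := fun z => z ^ (p - 1) * A z - (1 / p ^ 2) * (z ^ p * A z) with hg
  have hderiv : ∀ z : ℝ, 0 < z → HasDerivAt h (g z) z := by
    intro z hz'
    have hzne : z ≠ 0 := ne_of_gt hz'
    have hrp : HasDerivAt (fun w : ℝ => w ^ p) (p * z ^ (p - 1)) z :=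
      Real.hasDerivAt_rpow_const (Or.inl hzne)
    have hA' := hasDerivAt_A hz'
    have hB' := hasDerivAt_B hz'
    have h1 : HasDerivAt (fun w => w ^ p * A w)
        (p * z ^ (p - 1) * A z + z ^ p * (-(B z) / z)) z := by
      exact hrp.mul hA'
    have h2 : HasDerivAt (fun w => w ^ p * B w)
        (p * z ^ (p - 1) * B z + z ^ p * (-(A z))) z := by
      exact hrp.mul hB'
    have h3 := (h1.div_const p).add (h2.div_const (p ^ 2))
    have heq : (p * z ^ (p - 1) * A z + z ^ p * (-(B z) / z)) / p
        + (p * z ^ (p - 1) * B z + z ^ p * (-(A z))) / p ^ 2 = g z := by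
      have hzp2 : z ^ (p - 1) * z = z ^ p := by
        rw [Real.rpow_sub_one hzne, div_mul_cancel₀ _ hzne]
      rw [hg]
      field_simp
      linear_combination p * B z * hzp2
    rw [heq] at h3
    exact h3
  have hcont : ContinuousOn h (Icc 0 X) := by
    intro z hz
    rcases eq_or_lt_of_le hz.1 with h0 | hpos
    · -- z = 0
      subst h0
      have h00 : h 0 = 0 := by
        rw [hh]
        simp [Real.zero_rpow (ne_of_gt hp0)]
      have hlim : Tendsto h (𝓝[>] (0:ℝ)) (𝓝 0) := by
        have t1 := (tendsto_pow_A hp).div_const p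
        have t2 := (tendsto_pow_B hp).div_const (p ^ 2)
        have := t1.add t2
        simp only [zero_div, add_zero] at this
        exact this
      have hcw : ContinuousWithinAt h (Ioi 0) 0 := by
        show Tendsto h (𝓝[>] (0:ℝ)) (𝓝 (h 0))
        rw [h00]
        exact hlim
      exact (continuousWithinAt_Ioi_iff_Ici.mp hcw).mono Icc_subset_Ici_self
    · exact ((hderiv z hpos).continuousAt).continuousWithinAt
  have hint1 : IntegrableOn (fun z => z ^ (p - 1) * A z) (Ioc (0:ℝ) X) := integrableOn_pow_A hp hX
  have hint2 : IntegrableOn (fun z => z ^ (p + 1 - 1) * A z) (Ioc (0:ℝ) X) :=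
    integrableOn_pow_A (by linarith) hX
  have hint2' : IntegrableOn (fun z => z ^ p * A z) (Ioc (0:ℝ) X) := by
    simpa using hint2
  have hgint : IntervalIntegrable g volume 0 X := by
    rw [intervalIntegrable_iff_integrableOn_Ioc_of_le hX.le, hg]
    exact hint1.sub (hint2'.const_mul _)
  have hftc := intervalIntegral.integral_eq_sub_of_hasDerivAt_of_le hX.le hcont
    (fun z hz => hderiv z hz.1) hgint
  have h00 : h 0 = 0 := by
    rw [hh]
    simp [Real.zero_rpow (ne_of_gt hp0)]
  rw [h00, sub_zero, intervalIntegral.integral_of_le hX.le] at hftc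
  have hsplit : ∫ z in Ioc (0:ℝ) X, g z
      = (∫ z in Ioc (0:ℝ) X, z ^ (p-1) * A z)
        - (1/p^2) * ∫ z in Ioc (0:ℝ) X, z ^ p * A z := by
    rw [hg, integral_sub hint1 (hint2'.const_mul _), MeasureTheory.integral_const_mul]
  rw [hsplit, hh] at hftc
  linarith [hftc]

noncomputable def rr (m : ℝ) (N : ℕ) : ℝ := Real.Gamma m ^ 2 / Real.Gamma (m + N) ^ 2

lemma rr_zero {m : ℝ} (hm : 0 < m) : rr m 0 = 1 := by
  have h := Real.Gamma_pos_of_pos hm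
  rw [rr]
  simp only [Nat.cast_zero, add_zero]
  exact div_self (by positivity)

lemma rr_pos {m : ℝ} (hm : 0 < m) (N : ℕ) : 0 < rr m N := by
  have h1 := Real.Gamma_pos_of_pos hm
  have h2 := Real.Gamma_pos_of_pos (show (0:ℝ) < m + N by positivity)
  rw [rr]
  positivity

lemma rr_succ {m : ℝ} (hm : 0 < m) (N : ℕ) : rr m (N + 1) = rr m N / (m + N) ^ 2 := by
  have hmn : (0:ℝ) < m + N := by positivity
  have hg : Real.Gamma (m + ↑(N + 1)) = (m + N) * Real.Gamma (m + N) := by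
    rw [show (m + ↑(N + 1) : ℝ) = (m + ↑N) + 1 by push_cast; ring]
    exact Real.Gamma_add_one (ne_of_gt hmn)
  have h2 := Real.Gamma_pos_of_pos hmn
  rw [rr, rr, hg]
  field_simp

lemma iterA {m X : ℝ} (hm : 1/2 < m) (hX : 0 < X) (N : ℕ) :
    ∫ z in Ioc (0:ℝ) X, z ^ (m - 1) * besselK 0 (2 * Real.sqrt z)
      = (∑ j ∈ Finset.range N,
          (rr m j / (m + j) * (X ^ (m + j) * besselK 0 (2 * Real.sqrt X))
            + rr m j / (m + j) ^ 2
              * (X ^ (m + j) * (Real.sqrt X * besselK 1 (2 * Real.sqrt X)))))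
        + rr m N * ∫ z in Ioc (0:ℝ) X, z ^ (m + N - 1) * besselK 0 (2 * Real.sqrt z) := by
  have hm0 : (0:ℝ) < m := by linarith
  induction N with
  | zero =>
      rw [rr_zero hm0]
      simp
  | succ N ih =>
      have hp : 1/2 < m + (N:ℝ) := by
        have : (0:ℝ) ≤ N := Nat.cast_nonneg N
        linarith
      rw [ih, stepA hp hX, Finset.sum_range_succ, rr_succ hm0 N,
        show (m + ↑(N + 1) - 1 : ℝ) = m + ↑N by push_cast; ring]
      ring

section Limits
variable {m X : ℝ} (hm : 1/2 < m) (hX : 0 < X)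

lemma summable_rr_mul (hm : 1/2 < m) (hX : 0 < X) :
    Summable (fun N => rr m N * X ^ N) := by
  have hm0 : (0:ℝ) < m := by linarith
  apply summable_of_ratio_norm_eventually_le (r := 1/2) (by norm_num)
  have hev : ∀ᶠ N : ℕ in atTop, Real.sqrt (2 * X) ≤ (N : ℝ) :=
    tendsto_natCast_atTop_atTop.eventually_ge_atTop _
  filter_upwards [hev] with N hN
  have hN0 : (0:ℝ) ≤ N := Nat.cast_nonneg N
  have h2X : 2 * X ≤ (m + N) ^ 2 := by
    have h1 : Real.sqrt (2 * X) ^ 2 = 2 * X := Real.sq_sqrt (by positivity)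
    have h2 : Real.sqrt (2 * X) ^ 2 ≤ (N:ℝ) ^ 2 := by
      apply pow_le_pow_left₀ (Real.sqrt_nonneg _) hN
    have h3 : (N:ℝ) ^ 2 ≤ (m + N) ^ 2 := by nlinarith
    linarith
  have hmn : (0:ℝ) < m + N := by positivity
  have hr := rr_pos hm0 N
  rw [rr_succ hm0 N, Real.norm_eq_abs, Real.norm_eq_abs,
    abs_of_nonneg (by positivity), abs_of_nonneg (by positivity)]
  rw [div_mul_eq_mul_div, div_le_iff₀ (by positivity), pow_succ]
  have hkey := mul_le_mul_of_nonneg_left h2X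
    (show (0:ℝ) ≤ rr m N * X ^ N by positivity)
  nlinarith [hkey]

lemma tendsto_rem (hm : 1/2 < m) (hX : 0 < X) :
    Tendsto (fun N : ℕ => rr m N
      * ∫ z in Ioc (0:ℝ) X, z ^ (m + N - 1) * besselK 0 (2 * Real.sqrt z)) atTop (𝓝 0) := by
  have hm0 : (0:ℝ) < m := by linarith
  set I0 : ℝ := ∫ z in Ioc (0:ℝ) X, z ^ (m - 1) * besselK 0 (2 * Real.sqrt z) with hI0
  have hI0nn : 0 ≤ I0 := by
    apply setIntegral_nonneg measurableSet_Ioc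
    intro z hz
    exact mul_nonneg (Real.rpow_nonneg hz.1.le _) (besselK_nonneg _ _)
  have hbound : ∀ N : ℕ, (∫ z in Ioc (0:ℝ) X, z ^ (m + N - 1) * besselK 0 (2 * Real.sqrt z))
      ≤ X ^ N * I0 := by
    intro N
    have hp : 1/2 < m + (N:ℝ) := by
      have : (0:ℝ) ≤ N := Nat.cast_nonneg N
      linarith
    have h1 : IntegrableOn (fun z => z ^ (m + (N:ℝ) - 1) * besselK 0 (2 * Real.sqrt z))
        (Ioc (0:ℝ) X) := integrableOn_pow_A hp hX
    have h2 : IntegrableOn (fun z => X ^ N * (z ^ (m - 1) * besselK 0 (2 * Real.sqrt z)))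
        (Ioc (0:ℝ) X) := (integrableOn_pow_A hm hX).const_mul _
    have := setIntegral_mono_on h1 h2 measurableSet_Ioc ?_
    · rw [MeasureTheory.integral_const_mul] at this
      exact this
    intro z hz
    have hz0 : (0:ℝ) < z := hz.1
    have hzX : z ≤ X := hz.2
    have hexp : z ^ (m + (N:ℝ) - 1) = z ^ (m - 1) * z ^ N := by
      rw [show m + (N:ℝ) - 1 = (m - 1) + (N:ℝ) by ring, Real.rpow_add hz0,
        Real.rpow_natCast]
    rw [hexp]
    have hzN : z ^ N ≤ X ^ N := pow_le_pow_left₀ hz0.le hzX N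
    have hK := besselK_nonneg 0 (2 * Real.sqrt z)
    have hzm : (0:ℝ) ≤ z ^ (m - 1) := Real.rpow_nonneg hz0.le _
    calc z ^ (m - 1) * z ^ N * besselK 0 (2 * Real.sqrt z)
        ≤ z ^ (m - 1) * X ^ N * besselK 0 (2 * Real.sqrt z) := by
          apply mul_le_mul_of_nonneg_right _ hK
          exact mul_le_mul_of_nonneg_left hzN hzm
      _ = X ^ N * (z ^ (m - 1) * besselK 0 (2 * Real.sqrt z)) := by ring
  have hnn : ∀ N : ℕ, 0 ≤ rr m N
      * ∫ z in Ioc (0:ℝ) X, z ^ (m + N - 1) * besselK 0 (2 * Real.sqrt z) := by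
    intro N
    apply mul_nonneg (rr_pos hm0 N).le
    apply setIntegral_nonneg measurableSet_Ioc
    intro z hz
    exact mul_nonneg (Real.rpow_nonneg hz.1.le _) (besselK_nonneg _ _)
  have hub : ∀ N : ℕ, rr m N
      * (∫ z in Ioc (0:ℝ) X, z ^ (m + N - 1) * besselK 0 (2 * Real.sqrt z))
      ≤ (rr m N * X ^ N) * I0 := by
    intro N
    have := mul_le_mul_of_nonneg_left (hbound N) (rr_pos hm0 N).le
    calc rr m N * (∫ z in Ioc (0:ℝ) X, z ^ (m + N - 1) * besselK 0 (2 * Real.sqrt z))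
        ≤ rr m N * (X ^ N * I0) := this
      _ = (rr m N * X ^ N) * I0 := by ring
  have hlim : Tendsto (fun N : ℕ => (rr m N * X ^ N) * I0) atTop (𝓝 0) := by
    have := (summable_rr_mul hm hX).tendsto_atTop_zero.mul_const I0
    simpa using this
  exact squeeze_zero hnn hub hlim

end Limits

end StmtAux

open StmtAux in
theorem stmt_10 (m : ℝ) (hm : 1 / 2 < m) (ζ : ℝ) (hζ : 0 < ζ) :
    ∫ z in Set.Ioc (0 : ℝ) (ζ ^ 2), z ^ (m - 1) * besselK 0 (2 * Real.sqrt z)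
      = ζ ^ (2 * m) * besselK 0 (2 * ζ) * oneF2 m (m + 1) (ζ ^ 2) / m
        + ζ ^ (2 * m + 1) * besselK 1 (2 * ζ) * oneF2 (m + 1) (m + 1) (ζ ^ 2) / m ^ 2 := by
  have hm0 : (0:ℝ) < m := by linarith
  set X : ℝ := ζ ^ 2 with hXdef
  have hX : 0 < X := by positivity
  have hsX : Real.sqrt X = ζ := Real.sqrt_sq hζ.le
  have hζ2m : X ^ m = ζ ^ (2 * m) := by
    rw [hXdef, ← Real.rpow_natCast ζ 2, ← Real.rpow_mul hζ.le]
    norm_num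
  have hXm : ∀ j : ℕ, X ^ (m + (j:ℝ)) = ζ ^ (2 * m) * X ^ j := by
    intro j
    rw [Real.rpow_add hX, Real.rpow_natCast, hζ2m]
  set c : ℕ → ℝ := fun j => rr m j / (m + j) * (X ^ (m + j) * besselK 0 (2 * Real.sqrt X))
    with hc
  set d : ℕ → ℝ := fun j => rr m j / (m + j) ^ 2
      * (X ^ (m + j) * (Real.sqrt X * besselK 1 (2 * Real.sqrt X))) with hd
  have hKA : (0:ℝ) ≤ besselK 0 (2 * Real.sqrt X) := besselK_nonneg _ _
  have hKB : (0:ℝ) ≤ besselK 1 (2 * Real.sqrt X) := besselK_nonneg _ _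
  have hmj : ∀ j : ℕ, (0:ℝ) < m + j := fun j => by positivity
  -- summability
  have hc_nonneg : ∀ j, 0 ≤ c j := by
    intro j
    have := (rr_pos hm0 j).le
    have := (hmj j).le
    have := Real.rpow_nonneg hX.le (m + (j:ℝ))
    positivity
  have hd_nonneg : ∀ j, 0 ≤ d j := by
    intro j
    have := (rr_pos hm0 j).le
    have := (hmj j).le
    have h1 := Real.rpow_nonneg hX.le (m + (j:ℝ))
    have h2 := Real.sqrt_nonneg X
    positivity
  have hc_le : ∀ j, c j ≤ (rr m j * X ^ j)
      * (ζ ^ (2 * m) * besselK 0 (2 * Real.sqrt X) / m) := by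
    intro j
    have h1 : rr m j / (m + j) ≤ rr m j / m :=
      div_le_div_of_nonneg_left (rr_pos hm0 j).le hm0 (by

        have : (0:ℝ) ≤ j := Nat.cast_nonneg j
        linarith)
    calc c j ≤ rr m j / m * (X ^ (m + j) * besselK 0 (2 * Real.sqrt X)) := by
          apply mul_le_mul_of_nonneg_right h1
          exact mul_nonneg (Real.rpow_nonneg hX.le _) hKA
      _ = (rr m j * X ^ j) * (ζ ^ (2 * m) * besselK 0 (2 * Real.sqrt X) / m) := by
          rw [hXm j]; ring
  have hd_le : ∀ j, d j ≤ (rr m j * X ^ j)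
      * (ζ ^ (2 * m) * (Real.sqrt X * besselK 1 (2 * Real.sqrt X)) / m ^ 2) := by
    intro j
    have hmm : m ^ 2 ≤ (m + j) ^ 2 := by
      have : (0:ℝ) ≤ j := Nat.cast_nonneg j
      nlinarith
    have h1 : rr m j / (m + j) ^ 2 ≤ rr m j / m ^ 2 :=
      div_le_div_of_nonneg_left (rr_pos hm0 j).le (by positivity) hmm
    calc d j ≤ rr m j / m ^ 2
          * (X ^ (m + j) * (Real.sqrt X * besselK 1 (2 * Real.sqrt X))) := by
          apply mul_le_mul_of_nonneg_right h1
          exact mul_nonneg (Real.rpow_nonneg hX.le _) (mul_nonneg (Real.sqrt_nonneg X) hKB)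
      _ = (rr m j * X ^ j)
          * (ζ ^ (2 * m) * (Real.sqrt X * besselK 1 (2 * Real.sqrt X)) / m ^ 2) := by
          rw [hXm j]; ring
  have Sc : Summable c :=
    Summable.of_nonneg_of_le hc_nonneg hc_le ((summable_rr_mul hm hX).mul_right _)
  have Sd : Summable d :=
    Summable.of_nonneg_of_le hd_nonneg hd_le ((summable_rr_mul hm hX).mul_right _)
  -- limit identification
  set Itot : ℝ := ∫ z in Ioc (0:ℝ) X, z ^ (m - 1) * besselK 0 (2 * Real.sqrt z) with hItot
  have hpartial : ∀ N : ℕ, ∑ j ∈ Finset.range N, (c j + d j)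
      = Itot - rr m N * ∫ z in Ioc (0:ℝ) X, z ^ (m + N - 1) * besselK 0 (2 * Real.sqrt z) := by
    intro N
    have := iterA hm hX N
    rw [← hItot] at this
    rw [hc, hd]
    linarith [this]
  have htend1 : Tendsto (fun N => ∑ j ∈ Finset.range N, (c j + d j)) atTop (𝓝 Itot) := by
    have h0 := (tendsto_const_nhds (x := Itot) (f := atTop (α := ℕ))).sub (tendsto_rem hm hX)
    rw [sub_zero] at h0
    exact h0.congr (fun N => (hpartial N).symm)
  have htend2 : Tendsto (fun N => ∑ j ∈ Finset.range N, (c j + d j)) atTop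
      (𝓝 (∑' j, (c j + d j))) := (Sc.add Sd).hasSum.tendsto_sum_nat
  have hkey : Itot = ∑' j, (c j + d j) := tendsto_nhds_unique htend1 htend2
  -- Gamma identities
  have hGm : (0:ℝ) < Real.Gamma m := Real.Gamma_pos_of_pos hm0
  have hG1 : Real.Gamma (m + 1) = m * Real.Gamma m := by
    rw [Real.Gamma_add_one (ne_of_gt hm0)]
  have hGj : ∀ j : ℕ, Real.Gamma (m + 1 + j) = (m + j) * Real.Gamma (m + j) := by
    intro j
    rw [show (m + 1 + (j:ℝ)) = (m + j) + 1 by ring, Real.Gamma_add_one (ne_of_gt (hmj j))]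
  have hGmj : ∀ j : ℕ, (0:ℝ) < Real.Gamma (m + j) :=
    fun j => Real.Gamma_pos_of_pos (hmj j)
  have hζ1 : ζ ^ (2 * m + 1) = ζ ^ (2 * m) * ζ := by
    rw [Real.rpow_add hζ, Real.rpow_one]
  -- termwise identification with oneF2 summands
  have e1 : ∀ j : ℕ, c j = (ζ ^ (2 * m) * besselK 0 (2 * ζ) / m)
      * (X ^ j * (Real.Gamma m * Real.Gamma (m + 1))
        / (Real.Gamma (m + j) * Real.Gamma (m + 1 + j))) := by
    intro j
    rw [hc]
    simp only []
    rw [hsX, hXm j, hGj j, hG1, rr]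
    have h1 := hGmj j
    have h2 := hmj j
    field_simp
  have e2 : ∀ j : ℕ, d j = (ζ ^ (2 * m + 1) * besselK 1 (2 * ζ) / m ^ 2)
      * (X ^ j * (Real.Gamma (m + 1) * Real.Gamma (m + 1))
        / (Real.Gamma (m + 1 + j) * Real.Gamma (m + 1 + j))) := by
    intro j
    rw [hd]
    simp only []
    rw [hsX, hXm j, hGj j, hG1, rr, hζ1]
    have h1 := hGmj j
    have h2 := hmj j
    field_simp
  rw [hkey, Summable.tsum_add Sc Sd]
  have hF1 : ∑' j, c j = ζ ^ (2 * m) * besselK 0 (2 * ζ) / m * oneF2 m (m + 1) X := by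
    rw [tsum_congr e1, tsum_mul_left, oneF2]
  have hF2 : ∑' j, d j = ζ ^ (2 * m + 1) * besselK 1 (2 * ζ) / m ^ 2
      * oneF2 (m + 1) (m + 1) X := by
    rw [tsum_congr e2, tsum_mul_left, oneF2]
  rw [hF1, hF2]
  ring
end
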